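/- For every natural number m ≥ 1, one has 2·∑_{s=1}^{m} s·C(2m+1, m−s) = (2m+1)·C(2m, m) − 4^m, where C(a,b) denotes the binomial coefficient. (Equivalently, the number of critical points of the Morse function μ on X_{2m+1} equals (1/2)(−4^m + (2m+1)!/(m!)²).) -/

import Mathlib

open Finset

lemma even_halfway (p : ℕ) :
    2 * ∑ j ∈ range (p + 1), (2 * p).choose j = 4 ^ p + (2 * p).choose p := by
  have h1 : ∑ i ∈ range (2 * p + 1), (2 * p).choose i = 4 ^ p := by
    rw [Nat.sum_range_choose]
    rw [show (4:ℕ) ^ p = 2 ^ (2*p) by rw [pow_mul]; norm_num]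
  have h2 : (2 : ℕ) * p + 1 = (p + 1) + p := by ring
  rw [h2, Finset.sum_range_add] at h1
  have h3 : ∑ x ∈ range p, (2 * p).choose (p + 1 + x)
      = ∑ x ∈ range p, (2 * p).choose x := by
    rw [← Finset.sum_range_reflect (fun j => (2*p).choose (p+1+j)) p]
    apply Finset.sum_congr rfl
    intro x hx
    simp only [mem_range] at hx
    rw [show p + 1 + (p - 1 - x) = 2*p - x by omega]
    exact Nat.choose_symm (by omega)
  rw [h3] at h1
  have h4 : ∑ x ∈ range (p+1), (2*p).choose x
      = ∑ x ∈ range p, (2*p).choose x + (2*p).choose p := Finset.sum_range_succ _ _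
  omega

theorem stmt_0 (m : ℕ) (hm : 1 ≤ m) :
    (2 : ℤ) * ∑ s ∈ Finset.Icc 1 m, (s : ℤ) * ((2 * m + 1).choose (m - s)) =
      (2 * m + 1) * ((2 * m).choose m) - 4 ^ m := by
  obtain ⟨p, rfl⟩ : ∃ p, m = p + 1 := ⟨m - 1, by omega⟩
  set m := p + 1 with hmdef
  -- Step A: reindex to range m
  have hA : ∑ s ∈ Finset.Icc 1 m, (s : ℤ) * ((2 * m + 1).choose (m - s))
      = ∑ k ∈ range m, ((m - k : ℕ) : ℤ) * ((2 * m + 1).choose k) := by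
    rw [show Finset.Icc 1 m = Finset.Ico 1 (m+1) by rfl, Finset.sum_Ico_eq_sum_range]
    simp only [show m + 1 - 1 = m from rfl]
    rw [← Finset.sum_range_reflect (fun k => ((m - k : ℕ) : ℤ) * ((2 * m + 1).choose k)) m]
    apply Finset.sum_congr rfl
    intro x hx
    simp only [mem_range] at hx
    rw [show m - (m - 1 - x) = 1 + x by omega, show m - 1 - x = m - (1 + x) by omega]
  rw [hA]
  -- Step B: split into m * sum - sum k * choose
  have hB : ∑ k ∈ range m, ((m - k : ℕ) : ℤ) * ((2 * m + 1).choose k)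
      = (m : ℤ) * ∑ k ∈ range m, ((2 * m + 1).choose k : ℤ)
        - ∑ k ∈ range m, (k : ℤ) * ((2 * m + 1).choose k : ℤ) := by
    rw [Finset.mul_sum, ← Finset.sum_sub_distrib]
    apply Finset.sum_congr rfl
    intro k hk
    simp only [mem_range] at hk
    have : ((m - k : ℕ) : ℤ) = (m : ℤ) - k := by omega
    rw [this]; ring
  rw [hB]
  -- Step C: sum of choose over range m
  have hC : ∑ k ∈ range m, ((2 * m + 1).choose k : ℤ)
      = 4 ^ m - ((2 * m + 1).choose m : ℤ) := by
    have := Nat.sum_range_choose_halfway m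
    rw [Finset.sum_range_succ] at this
    have := congrArg (Nat.cast : ℕ → ℤ) this
    push_cast at this ⊢
    linarith
  -- Step D: sum k * choose
  have hD : ∑ k ∈ range m, (k : ℤ) * ((2 * m + 1).choose k : ℤ)
      = (2 * m + 1 : ℤ) * ∑ j ∈ range p, ((2 * m).choose j : ℤ) := by
    rw [Finset.sum_range_succ' (fun k => (k : ℤ) * ((2 * m + 1).choose k : ℤ)) p]
    simp only [Nat.cast_zero, zero_mul, add_zero]
    rw [Finset.mul_sum]
    apply Finset.sum_congr rfl
    intro j hj
    have h := Nat.add_one_mul_choose_eq (2 * m) j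
    have h2 := congrArg (Nat.cast : ℕ → ℤ) h
    push_cast [Nat.succ_eq_add_one] at h2 ⊢
    linarith [h2]
  rw [hC, hD]
  -- Step E: sum over range p
  have hE : (2:ℤ) * ∑ j ∈ range p, ((2 * m).choose j : ℤ)
      = 4 ^ m + ((2 * m).choose m : ℤ) - 2 * ((2*m).choose m : ℤ) - 2 * ((2*m).choose p : ℤ) := by
    have := even_halfway m
    have h2 : ∑ j ∈ range (m+1), ((2*m).choose j)
        = ∑ j ∈ range p, ((2*m).choose j) + (2*m).choose p + (2*m).choose m := by
      rw [show m + 1 = p + 1 + 1 from rfl, Finset.sum_range_succ, Finset.sum_range_succ]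
    rw [h2] at this
    have := congrArg (Nat.cast : ℕ → ℤ) this
    push_cast at this ⊢
    linarith
  -- Pascal: C(2m+1, m) = C(2m, p) + C(2m, m)
  have hP : ((2 * m + 1).choose m : ℤ) = ((2*m).choose p : ℤ) + ((2*m).choose m : ℤ) := by
    have : (2 * m + 1).choose m = (2*m).choose p + (2*m).choose m := by
      rw [show (2*m+1) = (2*m) + 1 from rfl, show m = p + 1 from rfl]
      exact Nat.choose_succ_succ _ _
    exact_mod_cast congrArg (Nat.cast : ℕ → ℤ) this
  -- L4 : (m+1) * C(2m, p) = m * C(2m, m)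
  have hL4 : ((m:ℤ) + 1) * ((2*m).choose p : ℤ) = (m:ℤ) * ((2*m).choose m : ℤ) := by
    have h := Nat.choose_succ_right_eq (2*m) p
    rw [show p + 1 = m from rfl, show 2*m - p = m + 1 by omega] at h
    have h2 := congrArg (Nat.cast : ℕ → ℤ) h
    push_cast at h2 ⊢
    linarith
  clear_value m
  subst hmdef
  push_cast
  push_cast at hE hP hL4
  linear_combination (-(2*(p:ℤ)+3)) * hE + (-(2*(p:ℤ)+2)) * hP + 2 * hL4
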